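/- Let (E, L, E) be a labeled space, where E denotes the smallest non-degenerate accommodating set. Then (E, L, E) is strongly cofinal if and only if for all nonempty A ∈ E, all B ∈ E, and every x in the closure of L(E^∞) (i.e., every infinite word x all of whose finite prefixes are labeled paths), there exists N ≥ 1 such that r(B, x_{[1,N]}) ∈ H(A), where H(A) is the smallest hereditary subset of E containing A. -/

import Mathlib

universe u v

variable {V : Type u} {Λ : Type v}

/-- The relative range `r(S, α)` of a set of vertices along a labeled path. -/
def relRange (Edge : V → Λ → V → Prop) : Set V → List Λ → Set V
  | S, [] => S
  | S, a :: α => relRange Edge {w | ∃ u ∈ S, Edge u a w} α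

/-- The range `r(α)` of a labeled path. -/
def lrange (Edge : V → Λ → V → Prop) (α : List Λ) : Set V :=
  relRange Edge Set.univ α

/-- `α` is a (nonempty) labeled path of the labeled graph. -/
def IsLP (Edge : V → Λ → V → Prop) (α : List Λ) : Prop :=
  α ≠ [] ∧ (lrange Edge α).Nonempty

/-- `L(SE¹)`: labels of edges emitted from `S`. -/
def edgeLabels (Edge : V → Λ → V → Prop) (S : Set V) : Set Λ :=
  {a | ∃ u ∈ S, ∃ w, Edge u a w}

/-- `S` is regular: every nonempty `B ∈ ℬ` with `B ⊆ S` emits a finite nonzero set of labels. -/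
def RegularSet (Edge : V → Λ → V → Prop) (ℬ : Set (Set V)) (S : Set V) : Prop :=
  ∀ B ∈ ℬ, B ⊆ S → B.Nonempty →
    (edgeLabels Edge B).Finite ∧ (edgeLabels Edge B).Nonempty

/-- `H ⊆ ℬ` is hereditary. -/
def Hered (Edge : V → Λ → V → Prop) (ℬ H : Set (Set V)) : Prop :=
  H ⊆ ℬ ∧ (∀ A ∈ H, ∀ α : List Λ, IsLP Edge α → relRange Edge A α ∈ H) ∧
    (∀ A ∈ H, ∀ B ∈ H, A ∪ B ∈ H) ∧ (∀ A ∈ H, ∀ B ∈ ℬ, B ⊆ A → B ∈ H)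

/-- `H` is saturated. -/
def Satur (Edge : V → Λ → V → Prop) (ℬ H : Set (Set V)) : Prop :=
  ∀ A ∈ ℬ, RegularSet Edge ℬ A →
    (∀ α : List Λ, IsLP Edge α → relRange Edge A α ∈ H) → A ∈ H

/-- `H(A)`: sets covered by finitely many relative ranges `r(A, αᵢ)`, `αᵢ ∈ L^#(E)`. -/
def HSet (Edge : V → Λ → V → Prop) (ℬ : Set (Set V)) (A : Set V) : Set (Set V) :=
  {B ∈ ℬ | ∃ l : List (List Λ), (∀ α ∈ l, α = [] ∨ IsLP Edge α) ∧
    B ⊆ ⋃ α ∈ l, relRange Edge A α}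

/-- `S(H(A))`: the saturation of `H(A)`. -/
def SHSet (Edge : V → Λ → V → Prop) (ℬ : Set (Set V)) (A : Set V) : Set (Set V) :=
  {B ∈ ℬ | ∃ n : ℕ,
    (∀ β : List Λ, (β = [] ∨ IsLP Edge β) → β.length = n →
      relRange Edge B β ∈ HSet Edge ℬ A) ∧
    (∀ γ : List Λ, (γ = [] ∨ IsLP Edge γ) → γ.length < n →
      ∃ C ∈ HSet Edge ℬ A, ∃ D ∈ ℬ, RegularSet Edge ℬ D ∧ relRange Edge B γ = C ∪ D)}

/-- `ℬ` is an accommodating set for the labeled graph. -/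
def Accommodating (Edge : V → Λ → V → Prop) (ℬ : Set (Set V)) : Prop :=
  (∀ α : List Λ, IsLP Edge α → lrange Edge α ∈ ℬ) ∧
    (∀ A ∈ ℬ, ∀ α : List Λ, IsLP Edge α → relRange Edge A α ∈ ℬ) ∧
    (∀ A ∈ ℬ, ∀ B ∈ ℬ, A ∪ B ∈ ℬ) ∧ (∀ A ∈ ℬ, ∀ B ∈ ℬ, A ∩ B ∈ ℬ)

/-- `ℬ` is non-degenerate: closed under relative complements (and contains `∅`). -/
def NonDegenerate (ℬ : Set (Set V)) : Prop :=
  (∅ : Set V) ∈ ℬ ∧ ∀ A ∈ ℬ, ∀ B ∈ ℬ, A \ B ∈ ℬ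

/-- The labeled space is weakly left-resolving. -/
def WLR (Edge : V → Λ → V → Prop) (ℬ : Set (Set V)) : Prop :=
  ∀ A ∈ ℬ, ∀ B ∈ ℬ, ∀ α : List Λ, IsLP Edge α →
    relRange Edge (A ∩ B) α = relRange Edge A α ∩ relRange Edge B α

/-- `ℬ` is the smallest non-degenerate accommodating set. -/
def SmallestAccom (Edge : V → Λ → V → Prop) (ℬ : Set (Set V)) : Prop :=
  Accommodating Edge ℬ ∧ NonDegenerate ℬ ∧
    ∀ ℬ' : Set (Set V), Accommodating Edge ℬ' → NonDegenerate ℬ' → ℬ ⊆ ℬ'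

/-- `x_{[1,n]}`: the length-`n` prefix of an infinite word. -/
def wordPrefix (x : ℕ → Λ) (n : ℕ) : List Λ := List.ofFn fun i : Fin n => x i.val

/-- `x` lies in the closure of `L(E^∞)`: all finite prefixes are labeled paths. -/
def InfWord (Edge : V → Λ → V → Prop) (x : ℕ → Λ) : Prop :=
  ∀ n : ℕ, 1 ≤ n → IsLP Edge (wordPrefix x n)

/-- Strong cofinality of a labeled space. -/
def StrCofinal (Edge : V → Λ → V → Prop) (ℬ : Set (Set V)) : Prop :=
  ∀ A ∈ ℬ, A.Nonempty → ∀ x : ℕ → Λ, InfWord Edge x →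
    ∃ N : ℕ, 1 ≤ N ∧ ∃ l : List (List Λ), (∀ α ∈ l, IsLP Edge α) ∧
      lrange Edge (wordPrefix x N) ⊆ ⋃ α ∈ l, relRange Edge A α

/-- Minimality: the only hereditary saturated subsets of `ℬ` are `{∅}` and `ℬ`. -/
def MinimalLS (Edge : V → Λ → V → Prop) (ℬ : Set (Set V)) : Prop :=
  ∀ H : Set (Set V), Hered Edge ℬ H → Satur Edge ℬ H → H ⊆ {∅} ∨ H = ℬ

/-- `L(SEⁿ)`: labels of paths of length `n` with source in `S`. -/
def labelsOfLen (Edge : V → Λ → V → Prop) (S : Set V) (n : ℕ) : Set (List Λ) :=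
  {β | β.length = n ∧ (relRange Edge S β).Nonempty}

/-- The labeled space is disagreeable. -/
def Disagreeable (Edge : V → Λ → V → Prop) (ℬ : Set (Set V)) : Prop :=
  ∀ A ∈ ℬ, A.Nonempty → ∀ β : List Λ, IsLP Edge β →
    ∃ n : ℕ, 1 ≤ n ∧ labelsOfLen Edge A (β.length * n) ≠ {(List.replicate n β).flatten}

/-- `(α, A)` is a cycle. -/
def IsCycle (Edge : V → Λ → V → Prop) (ℬ : Set (Set V)) (α : List Λ) (A : Set V) : Prop :=
  IsLP Edge α ∧ A ∈ ℬ ∧ A.Nonempty ∧ ∀ B ∈ ℬ, B ⊆ A → relRange Edge B α = B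

/-- The cycle `(α, A)` has an exit. -/
def CycleHasExit (Edge : V → Λ → V → Prop) (ℬ : Set (Set V)) (α : List Λ) (A : Set V) : Prop :=
  ∃ t : ℕ, 1 ≤ t ∧ t ≤ α.length ∧ ∃ B ∈ ℬ, B.Nonempty ∧
    B ⊆ relRange Edge A (α.take t) ∧
    edgeLabels Edge B ≠ {a : Λ | α[t % α.length]? = some a}

/-- The cycle `(α, A)` has no exits. -/
def CycleNoExit (Edge : V → Λ → V → Prop) (ℬ : Set (Set V)) (α : List Λ) (A : Set V) : Prop :=
  ∀ t : ℕ, 1 ≤ t → t ≤ α.length → ∀ B ∈ ℬ, B.Nonempty →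
    B ⊆ relRange Edge A (α.take t) →
    RegularSet Edge ℬ B ∧ edgeLabels Edge B = {a : Λ | α[t % α.length]? = some a}

/-- Condition (L): every cycle has an exit. -/
def CondL (Edge : V → Λ → V → Prop) (ℬ : Set (Set V)) : Prop :=
  ∀ (α : List Λ) (A : Set V), IsCycle Edge ℬ α A → CycleHasExit Edge ℬ α A

/-- `α` is a loop at `A`. -/
def IsLoop (Edge : V → Λ → V → Prop) (α : List Λ) (A : Set V) : Prop :=
  IsLP Edge α ∧ A ⊆ relRange Edge A α

/-- The loop `(α, A)` has an exit. -/
def LoopHasExit (Edge : V → Λ → V → Prop) (α : List Λ) (A : Set V) : Prop :=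
  {β : List Λ | ∃ k : ℕ, 1 ≤ k ∧ k ≤ α.length ∧ β = α.take k} ⊂
      {β : List Λ | 1 ≤ β.length ∧ β.length ≤ α.length ∧ (relRange Edge A β).Nonempty} ∨
    A ⊂ relRange Edge A α

/-- `β` is an irreducible path: not a repetition of a proper initial path. -/
def IrreduciblePath (β : List Λ) : Prop :=
  ∀ k : ℕ, 1 ≤ k → k < β.length → ∀ m : ℕ, β ≠ (List.replicate m (β.take k)).flatten

/-- The generalized vertex `[v]_l`. -/
def gvClass (Edge : V → Λ → V → Prop) (l : ℕ) (v : V) : Set V :=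
  {w | ∀ β : List Λ, 1 ≤ β.length → β.length ≤ l → (v ∈ lrange Edge β ↔ w ∈ lrange Edge β)}

/-- `s(x)`: sources of infinite paths labeled by `x`. -/
def srcInf (Edge : V → Λ → V → Prop) (x : ℕ → Λ) : Set V :=
  {w | ∃ p : ℕ → V, p 0 = w ∧ ∀ n : ℕ, Edge (p n) (x n) (p (n + 1))}



lemma relRange_mono (Edge : V → Λ → V → Prop) {S T : Set V} (h : S ⊆ T) :
    ∀ α : List Λ, relRange Edge S α ⊆ relRange Edge T α := by
  intro α
  induction α generalizing S T with
  | nil => exact h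
  | cons a α ih =>
    simp only [relRange]
    exact ih (fun w hw => by obtain ⟨u, hu, he⟩ := hw; exact ⟨u, h hu, he⟩)

lemma relRange_le_lrange (Edge : V → Λ → V → Prop) (S : Set V) (α : List Λ) :
    relRange Edge S α ⊆ lrange Edge α :=
  relRange_mono Edge (Set.subset_univ S) α

lemma relRange_append (Edge : V → Λ → V → Prop) (S : Set V) (α β : List Λ) :
    relRange Edge S (α ++ β) = relRange Edge (relRange Edge S α) β := by
  induction α generalizing S with
  | nil => rfl
  | cons a α ih => rw [List.cons_append, relRange, relRange, ih]

lemma lrange_cons (Edge : V → Λ → V → Prop) (a : Λ) (α : List Λ) :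
    lrange Edge (a :: α) = relRange Edge (lrange Edge [a]) α := by
  have := relRange_append Edge Set.univ [a] α
  simpa [lrange] using this

lemma wordPrefix_succ (x : ℕ → Λ) (n : ℕ) :
    wordPrefix x (n + 1) = x 0 :: wordPrefix (fun k => x (k + 1)) n := by
  simp [wordPrefix, List.ofFn_succ]

lemma wordPrefix_succ' (x : ℕ → Λ) (n : ℕ) :
    wordPrefix x (n + 1) = wordPrefix x n ++ [x n] := by
  induction n generalizing x with
  | zero => rfl
  | succ k ih =>
    rw [wordPrefix_succ x (k + 1), ih (fun k => x (k + 1)), ← List.cons_append,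
      ← wordPrefix_succ x k]

/-- From a cover by relative ranges over nonempty words, extract one with genuine
labeled paths. -/
lemma cover_filter (Edge : V → Λ → V → Prop) (A : Set V) (l : List (List Λ))
    (hl : ∀ α ∈ l, α ≠ []) :
    ∃ l' : List (List Λ), (∀ α ∈ l', IsLP Edge α) ∧
      (⋃ α ∈ l, relRange Edge A α) ⊆ ⋃ α ∈ l', relRange Edge A α := by
  induction l with
  | nil => exact ⟨[], by simp, by simp⟩
  | cons α l ih =>
    obtain ⟨l', hl', hsub⟩ := ih (fun β hβ => hl β (List.mem_cons_of_mem _ hβ))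
    by_cases hne : (lrange Edge α).Nonempty
    · refine ⟨α :: l', ?_, ?_⟩
      · intro β hβ
        rcases List.mem_cons.mp hβ with h | h
        · exact h ▸ ⟨hl α List.mem_cons_self, hne⟩
        · exact hl' β h
      · intro w hw
        simp only [Set.mem_iUnion, List.mem_cons] at hw ⊢
        obtain ⟨β, hβ, hwβ⟩ := hw
        rcases hβ with h | h
        · exact ⟨α, Or.inl rfl, h ▸ hwβ⟩
        · obtain ⟨γ, hγ, hwγ⟩ := Set.mem_iUnion₂.mp (hsub (Set.mem_biUnion h hwβ))
          exact ⟨γ, Or.inr hγ, hwγ⟩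
    · refine ⟨l', hl', ?_⟩
      intro w hw
      simp only [Set.mem_iUnion, List.mem_cons] at hw
      obtain ⟨β, hβ, hwβ⟩ := hw
      rcases hβ with h | h
      · exact absurd ⟨w, relRange_le_lrange Edge A α (h ▸ hwβ)⟩ hne
      · exact hsub (Set.mem_biUnion h hwβ)

/-- strong cofinality is equivalent to: for all nonempty `A ∈ ℰ`, `B ∈ ℰ`
and `x` in the closure of `L(E^∞)`, some `r(B, x_{[1,N]})` lies in `H(A)`. -/
theorem strongly_cofinal_iff (Edge : V → Λ → V → Prop) (ℰ : Set (Set V))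
    (hsm : SmallestAccom Edge ℰ) (hwlr : WLR Edge ℰ) :
    StrCofinal Edge ℰ ↔
      ∀ A ∈ ℰ, A.Nonempty → ∀ B ∈ ℰ, ∀ x : ℕ → Λ, InfWord Edge x →
        ∃ N : ℕ, 1 ≤ N ∧ relRange Edge B (wordPrefix x N) ∈ HSet Edge ℰ A := by
  constructor
  · -- forward direction
    intro hsc A hA hAne B hB x hx
    obtain ⟨N, hN, l, hlLP, hcov⟩ := hsc A hA hAne x hx
    refine ⟨N, hN, ?_⟩
    refine ⟨hsm.1.2.1 B hB _ (hx N hN), l, fun α hα => Or.inr (hlLP α hα), ?_⟩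
    exact (relRange_le_lrange Edge B _).trans hcov
  · -- reverse direction
    intro h A hA hAne x hx
    set y : ℕ → Λ := fun k => x (k + 1) with hy
    have hyInf : InfWord Edge y := by
      intro m hm
      have hx' := hx (m + 1) (by omega)
      refine ⟨?_, ?_⟩
      · intro hcon
        have : m = 0 := by
          have := congrArg List.length hcon
          simpa [wordPrefix] using this
        omega
      · obtain ⟨w, hw⟩ := hx'.2
        rw [wordPrefix_succ, lrange_cons] at hw
        exact ⟨w, relRange_le_lrange Edge _ _ hw⟩
    have hB1 : IsLP Edge (wordPrefix x 1) := hx 1 le_rfl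
    have hB : lrange Edge (wordPrefix x 1) ∈ ℰ := hsm.1.1 _ hB1
    obtain ⟨N, hN, hmem, l, hl, hcov⟩ := h A hA hAne _ hB y hyInf
    -- key equality
    have hkey : lrange Edge (wordPrefix x (N + 1)) =
        relRange Edge (lrange Edge (wordPrefix x 1)) (wordPrefix y N) := by
      rw [wordPrefix_succ, lrange_cons]
      congr 1
    -- extend the cover by one letter
    have hcov1 : lrange Edge (wordPrefix x (N + 1)) ⊆
        ⋃ α ∈ l, relRange Edge A α := hkey ▸ hcov
    set a := x (N + 1) with ha
    have hstep : lrange Edge (wordPrefix x (N + 2)) ⊆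
        ⋃ α ∈ l.map (· ++ [a]), relRange Edge A α := by
      rw [wordPrefix_succ' x (N + 1)]
      intro w hw
      rw [lrange, relRange_append] at hw
      obtain ⟨u, hu, hedge⟩ := hw
      obtain ⟨β, hβ, huβ⟩ := Set.mem_iUnion₂.mp (hcov1 hu)
      refine Set.mem_biUnion (List.mem_map_of_mem hβ) ?_
      rw [relRange_append]
      exact ⟨u, huβ, hedge⟩
    have hne : ∀ α ∈ l.map (· ++ [a]), α ≠ [] := by
      intro α hα
      obtain ⟨β, _, rfl⟩ := List.mem_map.mp hα
      simp
    obtain ⟨l', hl'LP, hl'cov⟩ := cover_filter Edge A _ hne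
    exact ⟨N + 2, by omega, l', hl'LP, hstep.trans hl'cov⟩
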